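/- Let m, n be nonnegative integers with n ≡ 0 (mod 2^{m+2}) and n ≥ 2^{m+2} (so that n - 2^{m+1} makes sense; by convention r_m(0) = 1). Then r_m(n) = r_m(n - 2^{m+1}) + Σ_{j=0}^{⌊(m+1)/2⌋} C(m+1, 2j) · r_m((n - 2j·2^{m+1})/2). -/

import Mathlib

/-- The integer partitioned by the binary partition `α`, where `α i` is the
number of parts equal to `2 ^ i` (so `α i` is the `α_{i+1}` of the paper). -/
def binWeight (α : ℕ →₀ ℕ) : ℕ := α.sum fun i a => a * 2 ^ i

/-- `Pm m n` is the set of binary partitions of `n` satisfying the divisibility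
conditions `2 ^ (m + 2 - i) ∣ α_i` for `1 ≤ i ≤ m + 1` (written here with the
index shifted down by one).  For `n < 0` the set is empty. -/
def Pm (m : ℕ) (n : ℤ) : Set (ℕ →₀ ℕ) :=
  {α | (binWeight α : ℤ) = n ∧ ∀ i ≤ m, 2 ^ (m + 1 - i) ∣ α i}

/-- `r m n` is the number of binary partitions of `n` satisfying the divisibility
conditions `2 ^ (m + 2 - i) ∣ α_i` for `1 ≤ i ≤ m + 1`. -/
noncomputable def r (m : ℕ) (n : ℤ) : ℕ := Nat.card (Pm m n)

/-! ### auxiliary lemmas -/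

lemma binWeight_add (a b : ℕ →₀ ℕ) : binWeight (a + b) = binWeight a + binWeight b := by
  unfold binWeight
  rw [Finsupp.sum_add_index]
  · intro i _; exact zero_mul _
  · intro i _ x y; exact add_mul x y _

lemma binWeight_single (i c : ℕ) : binWeight (Finsupp.single i c) = c * 2 ^ i := by
  unfold binWeight
  rw [Finsupp.sum_single_index]
  exact zero_mul _

lemma binWeight_sum {ι : Type*} (s : Finset ι) (f : ι → ℕ →₀ ℕ) :
    binWeight (∑ i ∈ s, f i) = ∑ i ∈ s, binWeight (f i) := by
  classical
  induction s using Finset.cons_induction with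
  | empty => simp [binWeight]
  | cons a s ha ih => rw [Finset.sum_cons, Finset.sum_cons, binWeight_add, ih]

lemma binWeight_term_le (α : ℕ →₀ ℕ) (i : ℕ) : α i * 2 ^ i ≤ binWeight α := by
  by_cases h : i ∈ α.support
  · exact Finset.single_le_sum (f := fun j => α j * 2 ^ j) (fun j _ => Nat.zero_le _) h
  · simp [Finsupp.notMem_support_iff.mp h]

lemma add_right_inj' (c : ℕ →₀ ℕ) : Function.Injective (fun α : ℕ →₀ ℕ => α + c) := by
  intro a b h
  ext i
  have := congrArg (fun f : ℕ →₀ ℕ => f i) h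
  simp only [Finsupp.add_apply] at this
  omega

lemma finite_binWeight (k : ℕ) : {α : ℕ →₀ ℕ | binWeight α = k}.Finite := by
  rw [← Set.finite_coe_iff]
  have hb : ∀ α : ℕ →₀ ℕ, binWeight α = k → ∀ i, α i < k + 1 := by
    intro α hα i
    have h1 : α i ≤ α i * 2 ^ i := Nat.le_mul_of_pos_right _ (pow_pos (by norm_num) i)
    have h2 := binWeight_term_le α i
    omega
  have hz : ∀ α : ℕ →₀ ℕ, binWeight α = k → ∀ i, k < i → α i = 0 := by
    intro α hα i hi
    by_contra h
    have h1 : 1 * 2 ^ i ≤ α i * 2 ^ i :=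
      Nat.mul_le_mul_right _ (Nat.one_le_iff_ne_zero.mpr h)
    have h2 := binWeight_term_le α i
    have h3 : i < 2 ^ i := Nat.lt_two_pow_self
    omega
  apply Finite.of_injective
    (f := fun α : {α : ℕ →₀ ℕ | binWeight α = k} =>
      (fun i : Fin (k + 1) => (⟨α.1 i, hb α.1 α.2 i⟩ : Fin (k + 1))))
  rintro ⟨α, hα⟩ ⟨β, hβ⟩ h
  ext i
  rcases le_or_gt i k with hik | hik
  · have := congrFun h ⟨i, by omega⟩
    simpa using this
  · rw [hz α hα i hik, hz β hβ i hik]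

lemma Pm_finite (m : ℕ) (x : ℤ) : (Pm m x).Finite := by
  rcases le_or_gt 0 x with h | h
  · obtain ⟨k, rfl⟩ := Int.eq_ofNat_of_zero_le h
    exact (finite_binWeight k).subset (fun α hα => by exact_mod_cast hα.1)
  · have : Pm m x = ∅ := by
      ext α
      simp only [Pm, Set.mem_setOf_eq, Set.mem_empty_iff_false, iff_false, not_and]
      intro h1
      exfalso
      have h2 : (0 : ℤ) ≤ (binWeight α : ℤ) := Int.natCast_nonneg _
      omega
    rw [this]; exact Set.finite_empty

lemma r_eq_ncard (m : ℕ) (x : ℤ) : r m x = (Pm m x).ncard := rfl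

lemma two_pow_dvd_binWeight {m : ℕ} {α : ℕ →₀ ℕ} (h : ∀ i ≤ m, 2 ^ (m + 1 - i) ∣ α i) :
    2 ^ (m + 1) ∣ binWeight α := by
  unfold binWeight Finsupp.sum
  apply Finset.dvd_sum
  intro i _
  rcases le_or_gt i m with him | him
  · obtain ⟨c, hc⟩ := h i him
    rw [hc]
    have hpow : (2 : ℕ) ^ (m + 1) = 2 ^ (m + 1 - i) * 2 ^ i := by
      rw [← pow_add]; congr 1; omega
    rw [hpow]
    exact ⟨c, by ring⟩
  · exact Dvd.dvd.mul_left (pow_dvd_pow 2 (by omega)) _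

lemma r_eq_zero_of_not_dvd {m : ℕ} {x : ℤ} (h : ¬ ((2 : ℤ) ^ (m + 1) ∣ x)) : r m x = 0 := by
  rw [r_eq_ncard]
  have hE : Pm m x = ∅ := by
    ext α
    simp only [Pm, Set.mem_setOf_eq, Set.mem_empty_iff_false, iff_false, not_and]
    intro h1 h2
    apply h
    rw [← h1]
    exact_mod_cast two_pow_dvd_binWeight h2
  rw [hE, Set.ncard_empty]

/-! ### Step 1: partitions with `α 0 ≠ 0` -/

lemma step1 (m : ℕ) (x : ℤ) :
    ((fun α => α + Finsupp.single 0 (2 ^ (m + 1))) '' Pm m x)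
      = {α ∈ Pm m (x + 2 ^ (m + 1)) | α 0 ≠ 0} := by
  ext β
  constructor
  · rintro ⟨α, ⟨hw, hd⟩, rfl⟩
    refine ⟨⟨?_, ?_⟩, ?_⟩
    · rw [binWeight_add, binWeight_single]
      push_cast
      linear_combination hw
    · intro i him
      rcases Nat.eq_zero_or_pos i with rfl | hi
      · simp only [Finsupp.add_apply, Finsupp.single_eq_same, Nat.sub_zero]
        exact dvd_add (hd 0 (Nat.zero_le _)) dvd_rfl
      · simp only [Finsupp.add_apply, Finsupp.single_eq_of_ne' (by omega : (0 : ℕ) ≠ i), add_zero]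
        exact hd i him
    · simp only [Finsupp.add_apply, Finsupp.single_eq_same, ne_eq]
      have h2 : 0 < 2 ^ (m + 1) := pow_pos (by norm_num) _
      omega
  · rintro ⟨⟨hw, hd⟩, h0⟩
    have hdvd0 : 2 ^ (m + 1) ∣ β 0 := by simpa using hd 0 (Nat.zero_le _)
    have hge : 2 ^ (m + 1) ≤ β 0 := Nat.le_of_dvd (Nat.pos_of_ne_zero h0) hdvd0
    have hkey : (β - Finsupp.single 0 (2 ^ (m + 1))) + Finsupp.single 0 (2 ^ (m + 1)) = β := by
      ext i
      rcases Nat.eq_zero_or_pos i with rfl | hi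
      · simp only [Finsupp.add_apply, Finsupp.tsub_apply, Finsupp.single_eq_same]
        omega
      · simp only [Finsupp.add_apply, Finsupp.tsub_apply,
          Finsupp.single_eq_of_ne' (by omega : (0 : ℕ) ≠ i)]
        omega
    refine ⟨β - Finsupp.single 0 (2 ^ (m + 1)), ⟨?_, ?_⟩, hkey⟩
    · have hBW := binWeight_add (β - Finsupp.single 0 (2 ^ (m + 1)))
        (Finsupp.single 0 (2 ^ (m + 1)))
      rw [hkey, binWeight_single] at hBW
      have hz : ((binWeight (β - Finsupp.single 0 (2 ^ (m + 1))) : ℤ))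
          + 2 ^ (m + 1) * 2 ^ 0 = (binWeight β : ℤ) := by exact_mod_cast hBW.symm
      rw [hw] at hz
      linear_combination hz
    · intro i him
      rcases Nat.eq_zero_or_pos i with rfl | hi
      · simp only [Finsupp.tsub_apply, Finsupp.single_eq_same, Nat.sub_zero]
        exact Nat.dvd_sub hdvd0 dvd_rfl
      · simp only [Finsupp.tsub_apply,
          Finsupp.single_eq_of_ne' (by omega : (0 : ℕ) ≠ i), Nat.sub_zero]
        exact hd i him

/-! ### Step 2: partitions with `α 0 = 0` and halving -/

/-- Binary partitions of `N` with divisibility conditions one level weaker. -/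
def Q (m N : ℕ) : Set (ℕ →₀ ℕ) := {β | binWeight β = N ∧ ∀ i < m, 2 ^ (m - i) ∣ β i}

def succEmb : ℕ ↪ ℕ := ⟨Nat.succ, Nat.succ_injective⟩

lemma binWeight_embDomain (β : ℕ →₀ ℕ) :
    binWeight (Finsupp.embDomain succEmb β) = 2 * binWeight β := by
  unfold binWeight
  rw [Finsupp.sum_embDomain]
  unfold Finsupp.sum
  rw [Finset.mul_sum]
  apply Finset.sum_congr rfl
  intro i _
  show β i * 2 ^ (i + 1) = 2 * (β i * 2 ^ i)
  rw [pow_succ]; ring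

lemma step2 (m N : ℕ) :
    ((fun β => Finsupp.embDomain succEmb β) '' Q m N)
      = {α ∈ Pm m ((2 * N : ℕ) : ℤ) | α 0 = 0} := by
  have h0range : (0 : ℕ) ∉ Set.range succEmb := by
    rintro ⟨k, hk⟩
    simp only [succEmb, Function.Embedding.coeFn_mk] at hk
    omega
  ext α
  constructor
  · rintro ⟨β, ⟨hw, hd⟩, rfl⟩
    refine ⟨⟨?_, ?_⟩, ?_⟩
    · rw [binWeight_embDomain, hw]
    · intro i him
      rcases Nat.eq_zero_or_pos i with rfl | hi
      · rw [Finsupp.embDomain_notin_range _ _ _ h0range]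
        exact dvd_zero _
      · obtain ⟨k, rfl⟩ : ∃ k, i = k + 1 := ⟨i - 1, by omega⟩
        rw [show k + 1 = succEmb k from rfl, Finsupp.embDomain_apply_self]
        show 2 ^ (m + 1 - (k + 1)) ∣ β k
        rw [show m + 1 - (k + 1) = m - k by omega]
        exact hd k (by omega)
    · exact Finsupp.embDomain_notin_range _ _ _ h0range
  · rintro ⟨⟨hw, hd⟩, h0⟩
    have hrec : Finsupp.embDomain succEmb
        (Finsupp.comapDomain Nat.succ α Nat.succ_injective.injOn) = α := by
      ext i
      rcases Nat.eq_zero_or_pos i with rfl | hi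
      · rw [Finsupp.embDomain_notin_range _ _ _ h0range]
        exact h0.symm
      · obtain ⟨k, rfl⟩ : ∃ k, i = k + 1 := ⟨i - 1, by omega⟩
        rw [show k + 1 = succEmb k from rfl, Finsupp.embDomain_apply_self]
        rfl
    refine ⟨Finsupp.comapDomain Nat.succ α Nat.succ_injective.injOn, ⟨?_, ?_⟩, hrec⟩
    · have hBW := binWeight_embDomain (Finsupp.comapDomain Nat.succ α Nat.succ_injective.injOn)
      rw [hrec] at hBW
      have h2N : binWeight α = 2 * N := by exact_mod_cast hw
      omega
    · intro i hi
      have happ : Finsupp.comapDomain Nat.succ α Nat.succ_injective.injOn i = α (i + 1) := rfl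
      rw [happ]
      have := hd (i + 1) (by omega)
      rwa [show m + 1 - (i + 1) = m - i by omega] at this
    

/-! ### Step 3: decomposing `Q` by parity patterns -/

/-- The offset partition attached to a parity pattern `S`. -/
noncomputable def off (m : ℕ) (S : Finset ℕ) : ℕ →₀ ℕ :=
  ∑ i ∈ S, Finsupp.single i (2 ^ (m - i))

lemma off_apply (m : ℕ) (S : Finset ℕ) (j : ℕ) :
    off m S j = if j ∈ S then 2 ^ (m - j) else 0 := by
  classical
  unfold off
  rw [Finsupp.finset_sum_apply]
  simp only [Finsupp.single_apply]
  exact Finset.sum_ite_eq' S j fun i => 2 ^ (m - i)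

lemma binWeight_off (m : ℕ) (S : Finset ℕ) (hS : S ⊆ Finset.range (m + 1)) :
    binWeight (off m S) = S.card * 2 ^ m := by
  have h1 : ∀ i ∈ S, binWeight (Finsupp.single i (2 ^ (m - i))) = 2 ^ m := by
    intro i hi
    rw [binWeight_single, ← pow_add]
    congr 1
    have := Finset.mem_range.mp (hS hi)
    omega
  rw [off, binWeight_sum, Finset.sum_congr rfl h1, Finset.sum_const, smul_eq_mul]

/-- The fiber of `Q m N` over parity pattern `S`. -/
def fiber (m N : ℕ) (S : Finset ℕ) : Set (ℕ →₀ ℕ) :=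
  {β | β ∈ Q m N ∧ ∀ i ≤ m, (2 ^ (m + 1 - i) ∣ β i ↔ i ∉ S)}

lemma step3 (m N : ℕ) (S : Finset ℕ) (hS : S ⊆ Finset.range (m + 1)) :
    ((fun α => α + off m S) '' Pm m ((N : ℤ) - S.card * 2 ^ m)) = fiber m N S := by
  ext β
  constructor
  · rintro ⟨α, ⟨hw, hd⟩, rfl⟩
    have hBW : binWeight (α + off m S) = binWeight α + S.card * 2 ^ m := by
      rw [binWeight_add, binWeight_off m S hS]
    refine ⟨⟨?_, ?_⟩, ?_⟩
    · have hcast : ((binWeight (α + off m S) : ℕ) : ℤ) = (N : ℤ) := by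
        rw [hBW]; push_cast; linear_combination hw
      exact_mod_cast hcast
    · intro i hi
      have h1 := hd i (by omega)
      have h2 : 2 ^ (m - i) ∣ (off m S) i := by
        rw [off_apply]
        split
        · exact dvd_rfl
        · exact dvd_zero _
      have h3 : 2 ^ (m - i) ∣ α i := dvd_trans (pow_dvd_pow 2 (by omega)) h1
      simpa [Finsupp.add_apply] using dvd_add h3 h2
    · intro i hi
      simp only [Finsupp.add_apply, off_apply]
      by_cases hiS : i ∈ S
      · simp only [if_pos hiS, hiS, not_true_eq_false, iff_false]
        intro hcon
        have h1 := hd i hi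
        have h4 : 2 ^ (m + 1 - i) ∣ 2 ^ (m - i) := by
          have := Nat.dvd_sub hcon h1
          simpa using this
        have h5 := Nat.le_of_dvd (pow_pos (by norm_num) _) h4
        have h6 : (2 : ℕ) ^ (m - i) < 2 ^ (m + 1 - i) :=
          Nat.pow_lt_pow_right (by norm_num) (by omega)
        omega
      · simp only [if_neg hiS, add_zero, hiS, not_false_eq_true, iff_true]
        exact hd i hi
  · rintro ⟨⟨hw, hq⟩, hpat⟩
    have hle : ∀ i, off m S i ≤ β i := by
      intro i
      rw [off_apply]
      split
      case isTrue hiS =>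
        have hi : i ≤ m := by have := Finset.mem_range.mp (hS hiS); omega
        have hnd : ¬ 2 ^ (m + 1 - i) ∣ β i := fun hcon => ((hpat i hi).mp hcon) hiS
        have hne : β i ≠ 0 := by rintro hz; exact hnd (by simp [hz])
        rcases Nat.lt_or_ge i m with him | him
        · exact Nat.le_of_dvd (Nat.pos_of_ne_zero hne) (hq i him)
        · have him' : i = m := by omega
          subst him'
          simp only [Nat.sub_self, pow_zero]
          omega
      case isFalse h => exact Nat.zero_le _
    have hkey : (β - off m S) + off m S = β := by
      ext i
      simp only [Finsupp.add_apply, Finsupp.tsub_apply]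
      have := hle i
      omega
    refine ⟨β - off m S, ⟨?_, ?_⟩, hkey⟩
    · have hBW := binWeight_add (β - off m S) (off m S)
      rw [hkey, binWeight_off m S hS, hw] at hBW
      have hz := congrArg (Nat.cast : ℕ → ℤ) hBW
      push_cast at hz
      linarith
    · intro i hi
      simp only [Finsupp.tsub_apply, off_apply]
      by_cases hiS : i ∈ S
      · rw [if_pos hiS]
        have hdv : 2 ^ (m - i) ∣ β i := by
          rcases Nat.lt_or_ge i m with him | him
          · exact hq i him
          · have him' : i = m := by omega
            subst him'
            simp
        obtain ⟨γ, hγ⟩ := hdv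
        have hnd : ¬ 2 ^ (m + 1 - i) ∣ β i := fun hcon => ((hpat i hi).mp hcon) hiS
        have hodd : γ % 2 = 1 := by
          rcases Nat.even_or_odd γ with he | ho
          · exfalso
            obtain ⟨d, hd2⟩ := he
            apply hnd
            refine ⟨d, ?_⟩
            rw [hγ, hd2, show m + 1 - i = (m - i) + 1 by omega, pow_succ]
            ring
          · exact Nat.odd_iff.mp ho
        obtain ⟨d, hd2⟩ : ∃ d, γ = 2 * d + 1 := ⟨γ / 2, by omega⟩
        refine ⟨d, ?_⟩
        rw [hγ, hd2, show m + 1 - i = (m - i) + 1 by omega, pow_succ]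
        have hexp : 2 ^ (m - i) * (2 * d + 1) = 2 ^ (m - i) * 2 * d + 2 ^ (m - i) := by ring
        rw [hexp, Nat.add_sub_cancel]
      · rw [if_neg hiS, Nat.sub_zero]
        exact (hpat i hi).mpr hiS

theorem stmt1 (m n : ℕ) (hge : 2 ^ (m + 2) ≤ n) (hmod : n % 2 ^ (m + 2) = 0) :
    r m n = r m ((n : ℤ) - 2 ^ (m + 1)) +
      ∑ j ∈ Finset.range ((m + 1) / 2 + 1),
        (m + 1).choose (2 * j) *
          r m (((n : ℤ) - 2 * j * 2 ^ (m + 1)) / 2) := by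
  classical
  obtain ⟨t, ht⟩ : (2 : ℕ) ^ (m + 2) ∣ n := Nat.dvd_of_mod_eq_zero hmod
  set N : ℕ := 2 ^ (m + 1) * t with hN
  have hn2 : n = 2 * N := by rw [ht, hN, pow_succ]; ring
  have hNdvd : (2 : ℕ) ^ (m + 1) ∣ N := ⟨t, rfl⟩
  -- split Pm m n by whether α 0 = 0
  have hsplit : Pm m (n : ℤ) = {α ∈ Pm m (n : ℤ) | α 0 ≠ 0} ∪ {α ∈ Pm m (n : ℤ) | α 0 = 0} := by
    ext α; by_cases h : α 0 = 0 <;> simp [h]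
  have hfin : (Pm m (n : ℤ)).Finite := Pm_finite m n
  have hfin1 : {α ∈ Pm m (n : ℤ) | α 0 ≠ 0}.Finite := hfin.subset (fun x hx => hx.1)
  have hfin0 : {α ∈ Pm m (n : ℤ) | α 0 = 0}.Finite := hfin.subset (fun x hx => hx.1)
  have hdisj : Disjoint {α ∈ Pm m (n : ℤ) | α 0 ≠ 0} {α ∈ Pm m (n : ℤ) | α 0 = 0} := by
    rw [Set.disjoint_left]; rintro α ⟨_, h⟩ ⟨_, h'⟩; exact h h'
  have hcard : r m n = {α ∈ Pm m (n : ℤ) | α 0 ≠ 0}.ncard + {α ∈ Pm m (n : ℤ) | α 0 = 0}.ncard := by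
    rw [r_eq_ncard]
    calc (Pm m (n : ℤ)).ncard
        = ({α ∈ Pm m (n : ℤ) | α 0 ≠ 0} ∪ {α ∈ Pm m (n : ℤ) | α 0 = 0}).ncard := by
          rw [← hsplit]
      _ = _ := Set.ncard_union_eq hdisj hfin1 hfin0
  -- first part
  have h1 : {α ∈ Pm m (n : ℤ) | α 0 ≠ 0}.ncard = r m ((n : ℤ) - 2 ^ (m + 1)) := by
    have hs1 := step1 m ((n : ℤ) - 2 ^ (m + 1))
    rw [show (n : ℤ) - 2 ^ (m + 1) + 2 ^ (m + 1) = (n : ℤ) by ring] at hs1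
    rw [r_eq_ncard, ← hs1,
      Set.ncard_image_of_injective _ (add_right_inj' (Finsupp.single 0 (2 ^ (m + 1))))]
  -- second part
  have h0 : {α ∈ Pm m (n : ℤ) | α 0 = 0}.ncard = (Q m N).ncard := by
    have hs2 := step2 m N
    rw [show ((2 * N : ℕ) : ℤ) = (n : ℤ) by exact_mod_cast congrArg (Nat.cast : ℕ → ℤ) hn2.symm]
      at hs2
    rw [← hs2, Set.ncard_image_of_injective _ (Finsupp.embDomain_injective succEmb)]
  -- decomposition of Q into fibers
  have hQfin : (Q m N).Finite := (finite_binWeight N).subset (fun β hβ => hβ.1)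
  have hfibfin : ∀ S : Finset ℕ, (fiber m N S).Finite := fun S => hQfin.subset (fun β hβ => hβ.1)
  have hfibcard : ∀ S ∈ (Finset.range (m + 1)).powerset,
      (fiber m N S).ncard = r m ((N : ℤ) - S.card * 2 ^ m) := by
    intro S hSmem
    have hSsub := Finset.mem_powerset.mp hSmem
    rw [← step3 m N S hSsub,
      Set.ncard_image_of_injective _ (add_right_inj' (off m S)), r_eq_ncard]
  have hQeq : hQfin.toFinset
      = (Finset.range (m + 1)).powerset.biUnion (fun S => (hfibfin S).toFinset) := by
    ext β
    simp only [Set.Finite.mem_toFinset, Finset.mem_biUnion, Finset.mem_powerset]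
    constructor
    · intro hβ
      refine ⟨(Finset.range (m + 1)).filter (fun i => ¬ 2 ^ (m + 1 - i) ∣ β i),
        Finset.filter_subset _ _, hβ, ?_⟩
      intro i hi
      constructor
      · intro hdvd hmem
        exact (Finset.mem_filter.mp hmem).2 hdvd
      · intro hnot
        by_contra hnd
        exact hnot (Finset.mem_filter.mpr ⟨Finset.mem_range.mpr (by omega), hnd⟩)
    · rintro ⟨S, _, hmem⟩
      exact hmem.1
  have hdisjfib : ∀ S ∈ (Finset.range (m + 1)).powerset,
      ∀ S' ∈ (Finset.range (m + 1)).powerset, S ≠ S' →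
        Disjoint ((hfibfin S).toFinset) ((hfibfin S').toFinset) := by
    intro S hS S' hS' hne
    rw [Finset.disjoint_left]
    intro β hβ hβ'
    rw [Set.Finite.mem_toFinset] at hβ hβ'
    apply hne
    ext i
    by_cases hir : i ∈ Finset.range (m + 1)
    · have him : i ≤ m := by have := Finset.mem_range.mp hir; omega
      have e1 := hβ.2 i him
      have e2 := hβ'.2 i him
      tauto
    · constructor
      · intro h; exact absurd (Finset.mem_powerset.mp hS h) hir
      · intro h; exact absurd (Finset.mem_powerset.mp hS' h) hir
  have hQcard : (Q m N).ncard
      = ∑ S ∈ (Finset.range (m + 1)).powerset, r m ((N : ℤ) - S.card * 2 ^ m) := by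
    rw [Set.ncard_eq_toFinset_card _ hQfin, hQeq, Finset.card_biUnion hdisjfib]
    apply Finset.sum_congr rfl
    intro S hSmem
    rw [← hfibcard S hSmem, Set.ncard_eq_toFinset_card _ (hfibfin S)]
  -- powerset sum to binomial sum
  have hps : ∑ S ∈ (Finset.range (m + 1)).powerset, r m ((N : ℤ) - S.card * 2 ^ m)
      = ∑ k ∈ Finset.range (m + 2), (m + 1).choose k • r m ((N : ℤ) - k * 2 ^ m) := by
    have := Finset.sum_powerset_apply_card
      (fun k : ℕ => r m ((N : ℤ) - k * 2 ^ m)) (x := Finset.range (m + 1))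
    rw [Finset.card_range] at this
    exact this
  -- odd terms vanish
  have hodd : ∀ k : ℕ, k % 2 = 1 → r m ((N : ℤ) - k * 2 ^ m) = 0 := by
    intro k hk
    apply r_eq_zero_of_not_dvd
    rintro ⟨c, hc⟩
    obtain ⟨t', ht'⟩ := hNdvd
    have hNc : (N : ℤ) = 2 ^ (m + 1) * t' := by exact_mod_cast ht'
    have h2 : (k : ℤ) * 2 ^ m = (2 * ((t' : ℤ) - c)) * 2 ^ m := by
      linear_combination hNc - hc
    have hpow : (2 : ℤ) ^ m ≠ 0 := pow_ne_zero _ (by norm_num)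
    have hcancel : (k : ℤ) = 2 * ((t' : ℤ) - c) := mul_right_cancel₀ hpow h2
    have hdvd : (2 : ℕ) ∣ k := by
      have : ((2 : ℕ) : ℤ) ∣ (k : ℤ) := ⟨(t' : ℤ) - c, by push_cast; linarith⟩
      exact_mod_cast this
    omega
  -- reindex even terms
  have hreindex : ∑ k ∈ Finset.range (m + 2), (m + 1).choose k • r m ((N : ℤ) - k * 2 ^ m)
      = ∑ j ∈ Finset.range ((m + 1) / 2 + 1),
          (m + 1).choose (2 * j) * r m ((N : ℤ) - (2 * j : ℕ) * 2 ^ m) := by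
    rw [← Finset.sum_filter_add_sum_filter_not (Finset.range (m + 2)) (fun k => k % 2 = 0)]
    have hz : ∑ k ∈ (Finset.range (m + 2)).filter (fun k => ¬ k % 2 = 0),
        (m + 1).choose k • r m ((N : ℤ) - k * 2 ^ m) = 0 := by
      apply Finset.sum_eq_zero
      intro k hk
      simp only [Finset.mem_filter] at hk
      rw [hodd k (by omega), smul_zero]
    rw [hz, add_zero]
    have himg : (Finset.range (m + 2)).filter (fun k => k % 2 = 0)
        = (Finset.range ((m + 1) / 2 + 1)).image (fun j => 2 * j) := by
      ext k
      simp only [Finset.mem_filter, Finset.mem_range, Finset.mem_image]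
      constructor
      · rintro ⟨hk, he⟩; exact ⟨k / 2, by omega, by omega⟩
      · rintro ⟨j, hj, rfl⟩; omega
    rw [himg, Finset.sum_image (by intro a _ b _ h; simp only at h; omega)]
    apply Finset.sum_congr rfl
    intro j _
    rw [smul_eq_mul]
  -- argument identification
  have harg : ∀ j : ℕ, ((n : ℤ) - 2 * j * 2 ^ (m + 1)) / 2 = (N : ℤ) - ((2 * j : ℕ) : ℤ) * 2 ^ m := by
    intro j
    have hn2' : (n : ℤ) = 2 * N := by exact_mod_cast congrArg (Nat.cast : ℕ → ℤ) hn2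
    rw [hn2']
    have hfact : (2 : ℤ) * N - 2 * j * 2 ^ (m + 1) = 2 * ((N : ℤ) - ((2 * j : ℕ) : ℤ) * 2 ^ m) := by
      push_cast; ring
    rw [hfact, Int.mul_ediv_cancel_left _ (by norm_num)]
  -- assemble
  rw [hcard, h1, h0, hQcard, hps, hreindex]
  congr 1
  apply Finset.sum_congr rfl
  intro j _
  rw [harg j]
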